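/- Let L be a lattice and suppose for each x ∈ L the principal filter [x) carries a unary operation ^x such that ([x), ∨, ∧, ^x) is dually weakly orthomodular and the compatibility condition z^x ∨ y = z^y holds whenever x ≤ y ≤ z. Define x → y := (x ∨ y)^y. Then → is a D-implication on L. -/
import Mathlib


/-- A family of compatible dually weakly orthomodular sublattices on principal filters induces a
D-implication via x → y := (x ⊔ y)^y. Here `op z x` denotes z^x. -/
theorem stmt_9 {L : Type*} [Lattice L] (op : L → L → L)
    (hmem : ∀ x z : L, x ≤ z → x ≤ op z x)
    (hdwom : ∀ x a b : L, x ≤ a → a ≤ b → b ⊓ (a ⊔ op b x) = a)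
    (hcomp : ∀ x y z : L, x ≤ y → y ≤ z → op z x ⊔ y = op z y)
    (impl : L → L → L) (himpl : ∀ x y : L, impl x y = op (x ⊔ y) y) :
    (∀ x y : L, impl (x ⊔ y) x = impl y x) ∧
    (∀ x y z : L, x ⊔ y ⊔ impl (x ⊔ z) y = impl z (x ⊔ y)) ∧
    (∀ x y : L, (x ⊔ y) ⊓ impl x y = y) := by
  refine ⟨?_, ?_, ?_⟩
  · intro x y
    rw [himpl, himpl]
    congr 1
    rw [sup_comm y x]
    exact sup_eq_left.mpr (le_sup_left : x ≤ x ⊔ y)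
  · intro x y z
    rw [himpl, himpl]
    have h := hcomp y (x ⊔ y) (x ⊔ y ⊔ z) le_sup_right le_sup_left
    have e1 : x ⊔ z ⊔ y = x ⊔ y ⊔ z := by
      rw [sup_assoc, sup_assoc, sup_comm z y]
    have e2 : z ⊔ (x ⊔ y) = x ⊔ y ⊔ z := sup_comm _ _
    rw [e1, e2, ← h, sup_comm]
  · intro x y
    rw [himpl]
    have h1 := hmem y (x ⊔ y) le_sup_right
    have h2 := hdwom y y (x ⊔ y) le_rfl le_sup_right
    rwa [sup_eq_right.mpr h1] at h2
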